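/- arXiv:2510.07216 — 2 statements merged into one kernel-verified Lean document; each statement's English description precedes it below -/
import Mathlib

section
/- Let Q be a real symmetric positive semidefinite d×d matrix and u ∈ ℂ^m with gradient vectors ∇u_i ∈ ℂ^d. Then the pointwise gradient of |u| (defined as |u|^{-1} Re Σ_{i=1}^m (∇u_i) conj(u_i) when u ≠ 0) satisfies (Q ∇|u|, ∇|u|) ≤ Σ_{i=1}^m (Q ∇u_i, ∇u_i). -/
open Complex Matrix
open scoped MatrixOrder

/-- For a real symmetric positive semidefinite matrix `Q`, a nonzero `u ∈ ℂ^m` and arbitrary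
gradient vectors `∇u_i ∈ ℂ^d`, the gradient `∇|u| = |u|⁻¹ Re Σ_i conj(u_i) ∇u_i` satisfies
`(Q ∇|u|, ∇|u|) ≤ Σ_i (Q ∇u_i, ∇u_i)`. -/
theorem stmt3 {d m : ℕ} (Q : Matrix (Fin d) (Fin d) ℝ) (hsym : Q.IsSymm)
    (hpsd : ∀ ξ : Fin d → ℝ, 0 ≤ ∑ h : Fin d, ∑ k : Fin d, Q h k * ξ k * ξ h)
    (u : Fin m → ℂ) (hu : u ≠ 0) (gu : Fin m → Fin d → ℂ) :
    (∑ h : Fin d, ∑ k : Fin d,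
        Q h k *
          ((∑ i : Fin m, gu i k * (starRingEnd ℂ) (u i)).re /
              Real.sqrt (∑ i : Fin m, Complex.normSq (u i))) *
          ((∑ i : Fin m, gu i h * (starRingEnd ℂ) (u i)).re /
              Real.sqrt (∑ i : Fin m, Complex.normSq (u i)))) ≤
      (∑ i : Fin m, ∑ h : Fin d, ∑ k : Fin d,
          (Q h k : ℂ) * gu i k * (starRingEnd ℂ) (gu i h)).re := by
  classical
  -- positive semidefiniteness
  have hQ : Q.PosSemidef := by
    refine Matrix.PosSemidef.of_dotProduct_mulVec_nonneg ?_ fun x => ?_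
    · ext i j
      simp [Matrix.conjTranspose_apply, hsym.apply]
    · have := hpsd x
      simp only [dotProduct, Matrix.mulVec, Pi.star_apply, star_trivial,
        Finset.mul_sum]
      calc (0:ℝ) ≤ ∑ h : Fin d, ∑ k : Fin d, Q h k * x k * x h := this
        _ = _ := by
          refine Finset.sum_congr rfl fun h _ => Finset.sum_congr rfl fun k _ => by ring
  set S := CFC.sqrt Q with hS
  -- key: the quadratic form via the square root
  have key : ∀ x y : Fin d → ℝ,
      ∑ h : Fin d, ∑ k : Fin d, Q h k * x k * y h
        = ∑ j : Fin d, (S *ᵥ x) j * (S *ᵥ y) j := by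
    intro x y
    have hsymS : ∀ c e, S c e = S e c := fun c e => by
      simpa using ((CFC.sqrt_nonneg Q).posSemidef.1.apply e c)
    have hQe : ∀ h k, Q h k = ∑ j : Fin d, S j h * S j k := fun h k => by
      rw [← CFC.sqrt_mul_sqrt_self Q hQ.nonneg, Matrix.mul_apply, ← hS]
      exact Finset.sum_congr rfl fun j _ => by rw [hsymS h j]
    calc ∑ h : Fin d, ∑ k : Fin d, Q h k * x k * y h
        = ∑ h : Fin d, ∑ k : Fin d, ∑ j : Fin d, S j h * S j k * x k * y h := by
          simp only [hQe, Finset.sum_mul]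
      _ = ∑ h : Fin d, ∑ j : Fin d, ∑ k : Fin d, S j h * S j k * x k * y h :=
          Finset.sum_congr rfl fun h _ => Finset.sum_comm ..
      _ = ∑ j : Fin d, ∑ h : Fin d, ∑ k : Fin d, S j h * S j k * x k * y h :=
          Finset.sum_comm ..
      _ = ∑ j : Fin d, (S *ᵥ x) j * (S *ᵥ y) j := by
          refine Finset.sum_congr rfl fun j _ => ?_
          simp only [Matrix.mulVec, dotProduct, Finset.sum_mul_sum]
          rw [Finset.sum_comm]
          exact Finset.sum_congr rfl fun h _ => Finset.sum_congr rfl fun k _ => by ring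
  set c2 : ℝ := ∑ i : Fin m, Complex.normSq (u i) with hc2def
  have hc2 : 0 < c2 := by
    obtain ⟨i0, hi0⟩ : ∃ i, u i ≠ 0 := by
      by_contra h; push_neg at h; exact hu (funext h)
    exact Finset.sum_pos' (fun i _ => Complex.normSq_nonneg _)
      ⟨i0, Finset.mem_univ _, Complex.normSq_pos.mpr hi0⟩
  set N : Fin d → ℝ := fun k => ∑ i : Fin m,
      ((gu i k).re * (u i).re + (gu i k).im * (u i).im) with hNdef
  have hN : ∀ k, (∑ i : Fin m, gu i k * (starRingEnd ℂ) (u i)).re = N k := by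
    intro k
    rw [hNdef, Complex.re_sum]
    exact Finset.sum_congr rfl fun i _ => by simp [Complex.mul_re]
  set p : Fin m → Fin d → ℝ := fun i => S *ᵥ (fun k => (gu i k).re) with hpdef
  set q : Fin m → Fin d → ℝ := fun i => S *ᵥ (fun k => (gu i k).im) with hqdef
  -- rewrite the RHS
  have hRHS : (∑ i : Fin m, ∑ h : Fin d, ∑ k : Fin d,
      (Q h k : ℂ) * gu i k * (starRingEnd ℂ) (gu i h)).re
      = ∑ i : Fin m, ∑ j : Fin d, (p i j ^ 2 + q i j ^ 2) := by
    rw [Complex.re_sum]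
    refine Finset.sum_congr rfl fun i _ => ?_
    rw [Complex.re_sum]
    calc ∑ h : Fin d, (∑ k : Fin d, (Q h k : ℂ) * gu i k * (starRingEnd ℂ) (gu i h)).re
        = (∑ h : Fin d, ∑ k : Fin d, Q h k * (gu i k).re * (gu i h).re)
          + ∑ h : Fin d, ∑ k : Fin d, Q h k * (gu i k).im * (gu i h).im := by
          rw [← Finset.sum_add_distrib]
          refine Finset.sum_congr rfl fun h _ => ?_
          rw [Complex.re_sum, ← Finset.sum_add_distrib]
          refine Finset.sum_congr rfl fun k _ => ?_
          simp [Complex.mul_re]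
      _ = ∑ j : Fin d, (p i j ^ 2 + q i j ^ 2) := by
          rw [key, key, ← Finset.sum_add_distrib]
          exact Finset.sum_congr rfl fun j _ => by rw [hpdef, hqdef]; ring
  rw [hRHS]
  simp only [hN]
  -- rewrite the LHS
  have hLHS : (∑ h : Fin d, ∑ k : Fin d, Q h k * (N k / Real.sqrt c2) * (N h / Real.sqrt c2))
      = (∑ j : Fin d, (S *ᵥ N) j ^ 2) / c2 := by
    calc ∑ h : Fin d, ∑ k : Fin d, Q h k * (N k / Real.sqrt c2) * (N h / Real.sqrt c2)
        = (∑ h : Fin d, ∑ k : Fin d, Q h k * N k * N h) / (Real.sqrt c2 * Real.sqrt c2) := by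
          conv_rhs => rw [Finset.sum_div]
          refine Finset.sum_congr rfl fun h _ => ?_
          conv_rhs => rw [Finset.sum_div]
          exact Finset.sum_congr rfl fun k _ => by ring
      _ = (∑ j : Fin d, (S *ᵥ N) j ^ 2) / c2 := by
          rw [Real.mul_self_sqrt hc2.le, key]
          congr 1
          exact Finset.sum_congr rfl fun j _ => (sq _).symm
  rw [hLHS]
  -- pointwise expression of S *ᵥ N
  have hSN : ∀ j, (S *ᵥ N) j = ∑ i : Fin m, ((u i).re * p i j + (u i).im * q i j) := by
    intro j
    show ∑ k : Fin d, S j k * N k = _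
    rw [hNdef]
    simp only [Finset.mul_sum]
    rw [Finset.sum_comm]
    refine Finset.sum_congr rfl fun i _ => ?_
    rw [hpdef, hqdef]
    show _ = (u i).re * ∑ k : Fin d, S j k * (gu i k).re
        + (u i).im * ∑ k : Fin d, S j k * (gu i k).im
    simp only [Finset.mul_sum, ← Finset.sum_add_distrib]
    exact Finset.sum_congr rfl fun k _ => by ring
  -- Cauchy–Schwarz per coordinate
  have hcs : ∀ j, (S *ᵥ N) j ^ 2 ≤ c2 * ∑ i : Fin m, (p i j ^ 2 + q i j ^ 2) := by
    intro j
    rw [hSN j]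
    have H := Finset.sum_mul_sq_le_sq_mul_sq Finset.univ
      (Sum.elim (fun i : Fin m => (u i).re) (fun i : Fin m => (u i).im))
      (Sum.elim (fun i : Fin m => p i j) (fun i : Fin m => q i j))
    simp only [Fintype.sum_sum_type, Sum.elim_inl, Sum.elim_inr] at H
    calc (∑ i : Fin m, ((u i).re * p i j + (u i).im * q i j)) ^ 2
        = (∑ i : Fin m, (u i).re * p i j + ∑ i : Fin m, (u i).im * q i j) ^ 2 := by
          rw [Finset.sum_add_distrib]
      _ ≤ (∑ i : Fin m, (u i).re ^ 2 + ∑ i : Fin m, (u i).im ^ 2)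
            * (∑ i : Fin m, p i j ^ 2 + ∑ i : Fin m, q i j ^ 2) := H
      _ = c2 * ∑ i : Fin m, (p i j ^ 2 + q i j ^ 2) := by
          rw [← Finset.sum_add_distrib, ← Finset.sum_add_distrib, hc2def]
          congr 1
          exact Finset.sum_congr rfl fun i _ => by
            rw [Complex.normSq_apply]; ring
  rw [div_le_iff₀ hc2]
  calc ∑ j : Fin d, (S *ᵥ N) j ^ 2
      ≤ ∑ j : Fin d, c2 * ∑ i : Fin m, (p i j ^ 2 + q i j ^ 2) :=
        Finset.sum_le_sum fun j _ => hcs j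
    _ = (∑ i : Fin m, ∑ j : Fin d, (p i j ^ 2 + q i j ^ 2)) * c2 := by
        rw [← Finset.mul_sum, Finset.sum_comm, mul_comm]
end

section
/- Let V be a real m×m matrix (not necessarily symmetric) whose symmetric part V_S = (V + Vᵀ)/2 is positive semidefinite, and suppose there exists c₀ > 0 such that |Im(Vξ, ξ)| ≤ c₀ Re(Vξ, ξ) for every ξ ∈ ℂ^m. Then |(Vξ, η)| ≤ (1 + c₀)(V_S ξ, ξ)^{1/2} (V_S η, η)^{1/2} for every ξ, η ∈ ℂ^m. -/
open Complex

/-- The Hermitian form `(Vξ, η) = Σ_i (Σ_j V_{ij} ξ_j) conj(η_i)` associated with a real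
matrix `V`. -/
noncomputable def hermForm {m : ℕ} (V : Matrix (Fin m) (Fin m) ℝ) (ξ η : Fin m → ℂ) : ℂ :=
  ∑ i : Fin m, (∑ j : Fin m, (V i j : ℂ) * ξ j) * (starRingEnd ℂ) (η i)


noncomputable def hF {m : ℕ} (W : Matrix (Fin m) (Fin m) ℂ) (ξ η : Fin m → ℂ) : ℂ :=
  ∑ i : Fin m, ∑ j : Fin m, W i j * ξ j * (starRingEnd ℂ) (η i)

section lemmas
variable {m : ℕ} (W W' : Matrix (Fin m) (Fin m) ℂ) (ξ η : Fin m → ℂ)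

lemma hF_expand_add : hF W (ξ + η) (ξ + η) = hF W ξ ξ + hF W ξ η + hF W η ξ + hF W η η := by
  simp only [hF, Pi.add_apply, map_add]
  rw [← Finset.sum_add_distrib, ← Finset.sum_add_distrib, ← Finset.sum_add_distrib]
  refine Finset.sum_congr rfl fun i _ => ?_
  rw [← Finset.sum_add_distrib, ← Finset.sum_add_distrib, ← Finset.sum_add_distrib]
  refine Finset.sum_congr rfl fun j _ => ?_
  ring

lemma hF_expand_sub : hF W (ξ - η) (ξ - η) = hF W ξ ξ - hF W ξ η - hF W η ξ + hF W η η := by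
  simp only [hF, Pi.sub_apply, map_sub]
  rw [← Finset.sum_sub_distrib, ← Finset.sum_sub_distrib, ← Finset.sum_add_distrib]
  refine Finset.sum_congr rfl fun i _ => ?_
  rw [← Finset.sum_sub_distrib, ← Finset.sum_sub_distrib, ← Finset.sum_add_distrib]
  refine Finset.sum_congr rfl fun j _ => ?_
  ring

lemma hF_smul_left (c : ℂ) : hF W (c • ξ) η = c * hF W ξ η := by
  simp only [hF, Pi.smul_apply, smul_eq_mul, Finset.mul_sum]
  exact Finset.sum_congr rfl fun i _ => Finset.sum_congr rfl fun j _ => by ring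

lemma hF_smul_right (c : ℂ) : hF W ξ (c • η) = (starRingEnd ℂ) c * hF W ξ η := by
  simp only [hF, Pi.smul_apply, smul_eq_mul, map_mul, Finset.mul_sum]
  exact Finset.sum_congr rfl fun i _ => Finset.sum_congr rfl fun j _ => by ring

lemma hF_msmul (c : ℂ) : hF (c • W) ξ η = c * hF W ξ η := by
  simp only [hF, Matrix.smul_apply, smul_eq_mul, Finset.mul_sum]
  exact Finset.sum_congr rfl fun i _ => Finset.sum_congr rfl fun j _ => by ring

lemma hF_msub : hF (W - W') ξ η = hF W ξ η - hF W' ξ η := by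
  simp only [hF, Matrix.sub_apply, sub_mul, Finset.sum_sub_distrib]

lemma hF_herm (hW : ∀ i j, W j i = (starRingEnd ℂ) (W i j)) :
    hF W η ξ = (starRingEnd ℂ) (hF W ξ η) := by
  rw [hF, hF]
  simp only [map_sum, map_mul, Complex.conj_conj]
  rw [Finset.sum_comm]
  refine Finset.sum_congr rfl fun i _ => Finset.sum_congr rfl fun j _ => ?_
  rw [← hW]; ring
end lemmas

theorem entry_half {m : ℕ} (V : Matrix (Fin m) (Fin m) ℝ) (i j : Fin m) :
    ((V + V.transpose) / 2) i j = (V i j + V j i) / 2 := by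
  have h2 : (2 : Matrix (Fin m) (Fin m) ℝ)⁻¹ = (2 : ℝ)⁻¹ • (1 : Matrix (Fin m) (Fin m) ℝ) := by
    apply Matrix.inv_eq_right_inv
    have h2 : (2 : Matrix (Fin m) (Fin m) ℝ) = (2 : ℝ) • (1 : Matrix (Fin m) (Fin m) ℝ) := by
      rw [Matrix.smul_one_eq_diagonal]; rfl
    rw [h2, Matrix.smul_mul, Matrix.mul_smul, smul_smul]
    norm_num
  rw [div_eq_mul_inv, h2, Matrix.mul_smul, Matrix.mul_one]
  simp [Matrix.add_apply, Matrix.transpose_apply]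
  ring

lemma real_opt {x a b c : ℝ} (ha : 0 ≤ a) (hb : 0 ≤ b) (hc : 0 ≤ c)
    (h : ∀ t : ℝ, 0 < t → x ≤ c * (t ^ 2 * a + b / t ^ 2) / 2) :
    x ≤ c * Real.sqrt a * Real.sqrt b := by
  rcases eq_or_lt_of_le ha with h0 | hapos
  · have hx : x ≤ 0 := by
      by_contra hx
      push_neg at hx
      rcases eq_or_lt_of_le (mul_nonneg hc hb) with hcb | hcb
      · have := h 1 one_pos
        rw [← h0] at this
        nlinarith
      · have hcpos : 0 < c := lt_of_le_of_ne hc (fun hh => by rw [← hh] at hcb; simp at hcb)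
        have hbpos : 0 < b := by nlinarith
        set t := Real.sqrt (c * b / x) with ht
        have htpos : 0 < t := Real.sqrt_pos.mpr (by positivity)
        have ht2 : t ^ 2 = c * b / x := Real.sq_sqrt (by positivity)
        have := h t htpos
        rw [← h0, ht2] at this
        have key : c * (c * b / x * 0 + b / (c * b / x)) / 2 = x / 2 := by
          field_simp; ring
        rw [key] at this
        linarith
    calc x ≤ 0 := hx
    _ ≤ c * Real.sqrt a * Real.sqrt b := by positivity
  · rcases eq_or_lt_of_le hb with h0b | hbpos
    · have hx : x ≤ 0 := by
        by_contra hx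
        push_neg at hx
        rcases eq_or_lt_of_le (mul_nonneg hc ha) with hca | hca
        · have := h 1 one_pos
          rw [← h0b] at this
          nlinarith
        · set t := Real.sqrt (x / (c * a)) with ht
          have htpos : 0 < t := Real.sqrt_pos.mpr (by positivity)
          have ht2 : t ^ 2 = x / (c * a) := Real.sq_sqrt (by positivity)
          have := h t htpos
          rw [← h0b, ht2] at this
          have hcpos : 0 < c := lt_of_le_of_ne hc (fun hh => by rw [← hh] at hca; simp at hca)
          have key : c * (x / (c * a) * a + 0 / (x / (c * a))) / 2 = x / 2 := by
            rw [zero_div, add_zero]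
            field_simp
          rw [key] at this
          linarith
      calc x ≤ 0 := hx
      _ ≤ c * Real.sqrt a * Real.sqrt b := by positivity
    · set sa := Real.sqrt a with hsa
      set sb := Real.sqrt b with hsb
      have hsapos : 0 < sa := Real.sqrt_pos.mpr hapos
      have hsbpos : 0 < sb := Real.sqrt_pos.mpr hbpos
      have hsa2 : sa ^ 2 = a := Real.sq_sqrt ha
      have hsb2 : sb ^ 2 = b := Real.sq_sqrt hb
      set t := Real.sqrt (sb / sa) with htd
      have htpos : 0 < t := Real.sqrt_pos.mpr (by positivity)
      have ht2 : t ^ 2 = sb / sa := Real.sq_sqrt (by positivity)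
      have := h t htpos
      rw [ht2] at this
      have heq : c * (sb / sa * a + b / (sb / sa)) / 2 = c * sa * sb := by
        rw [← hsa2, ← hsb2]; field_simp; ring
      rw [heq] at this
      exact this

lemma ofReal_mul_re' (r : ℝ) (z : ℂ) : ((r : ℂ) * z).re = r * z.re := by
  simp [Complex.mul_re]

lemma key_cs {m : ℕ} {c : ℝ} (M Ws : Matrix (Fin m) (Fin m) ℂ)
    (hM : ∀ i j, M j i = (starRingEnd ℂ) (M i j))
    (hQpos : ∀ ξ, 0 ≤ (hF Ws ξ ξ).re)
    (hc : 0 ≤ c)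
    (hbound : ∀ ξ, ‖hF M ξ ξ‖ ≤ c * (hF Ws ξ ξ).re) :
    ∀ ξ η : Fin m → ℂ, ‖hF M ξ η‖ ≤
      c * Real.sqrt ((hF Ws ξ ξ).re) * Real.sqrt ((hF Ws η η).re) := by
  have reBound : ∀ ξ η, (hF M ξ η).re ≤ c * ((hF Ws ξ ξ).re + (hF Ws η η).re) / 2 := by
    intro ξ η
    have e1 := congrArg Complex.re (hF_expand_add M ξ η)
    have e2 := congrArg Complex.re (hF_expand_sub M ξ η)
    have hherm : hF M η ξ = (starRingEnd ℂ) (hF M ξ η) := hF_herm M ξ η hM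
    rw [hherm] at e1 e2
    simp only [Complex.add_re, Complex.sub_re, Complex.conj_re] at e1 e2
    have q1 := congrArg Complex.re (hF_expand_add Ws ξ η)
    have q2 := congrArg Complex.re (hF_expand_sub Ws ξ η)
    simp only [Complex.add_re, Complex.sub_re] at q1 q2
    have b1 : (hF M (ξ + η) (ξ + η)).re ≤ c * (hF Ws (ξ + η) (ξ + η)).re :=
      le_trans (Complex.re_le_norm _) (hbound _)
    have b2 : -(hF M (ξ - η) (ξ - η)).re ≤ c * (hF Ws (ξ - η) (ξ - η)).re :=
      le_trans (le_trans (neg_le_abs _) (Complex.abs_re_le_norm _)) (hbound _)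
    have hq : (hF Ws (ξ + η) (ξ + η)).re + (hF Ws (ξ - η) (ξ - η)).re
        = 2 * (hF Ws ξ ξ).re + 2 * (hF Ws η η).re := by linarith
    have hsum : c * (hF Ws (ξ + η) (ξ + η)).re + c * (hF Ws (ξ - η) (ξ - η)).re
        = c * (2 * (hF Ws ξ ξ).re + 2 * (hF Ws η η).re) := by
      rw [← mul_add, hq]
    linarith
  have reBound2 : ∀ ξ η, (hF M ξ η).re ≤
      c * Real.sqrt ((hF Ws ξ ξ).re) * Real.sqrt ((hF Ws η η).re) := by
    intro ξ η
    apply real_opt (hQpos ξ) (hQpos η) hc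
    intro t ht
    have h1 : hF M (((t : ℝ) : ℂ) • ξ) (((t⁻¹ : ℝ) : ℂ) • η) = hF M ξ η := by
      rw [hF_smul_left, hF_smul_right, Complex.conj_ofReal, ← mul_assoc,
        ← Complex.ofReal_mul, mul_inv_cancel₀ (ne_of_gt ht), Complex.ofReal_one, one_mul]
    have h2 : (hF Ws (((t : ℝ) : ℂ) • ξ) (((t : ℝ) : ℂ) • ξ)).re = t ^ 2 * (hF Ws ξ ξ).re := by
      rw [hF_smul_left, hF_smul_right, Complex.conj_ofReal, ← mul_assoc,
        ← Complex.ofReal_mul, ofReal_mul_re']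
      ring
    have h3 : (hF Ws (((t⁻¹ : ℝ) : ℂ) • η) (((t⁻¹ : ℝ) : ℂ) • η)).re
        = (hF Ws η η).re / t ^ 2 := by
      rw [hF_smul_left, hF_smul_right, Complex.conj_ofReal, ← mul_assoc,
        ← Complex.ofReal_mul, ofReal_mul_re', ← mul_inv, ← sq]
      exact inv_mul_eq_div _ _
    calc (hF M ξ η).re = (hF M (((t : ℝ) : ℂ) • ξ) (((t⁻¹ : ℝ) : ℂ) • η)).re := by rw [h1]
    _ ≤ c * ((hF Ws (((t : ℝ) : ℂ) • ξ) (((t : ℝ) : ℂ) • ξ)).re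
          + (hF Ws (((t⁻¹ : ℝ) : ℂ) • η) (((t⁻¹ : ℝ) : ℂ) • η)).re) / 2 := reBound _ _
    _ = c * (t ^ 2 * (hF Ws ξ ξ).re + (hF Ws η η).re / t ^ 2) / 2 := by rw [h2, h3]
  intro ξ η
  by_cases hz : hF M ξ η = 0
  · rw [hz]
    simp only [norm_zero]
    have := hQpos ξ
    have := hQpos η
    positivity
  · set z := hF M ξ η with hzdef
    have habs : (0 : ℝ) < ‖z‖ := by
      simpa using (norm_pos_iff.mpr hz)
    set u : ℂ := (starRingEnd ℂ) z / ((‖z‖ : ℝ) : ℂ) with hu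
    have h1 : hF M (u • ξ) η = ((‖z‖ : ℝ) : ℂ) := by
      rw [hF_smul_left, ← hzdef, hu, div_mul_eq_mul_div, mul_comm, Complex.mul_conj,
        Complex.normSq_eq_norm_sq, sq, Complex.ofReal_mul, mul_div_assoc,
        div_self (by exact_mod_cast ne_of_gt habs), mul_one]
    have h2 : (hF Ws (u • ξ) (u • ξ)).re = (hF Ws ξ ξ).re := by
      rw [hF_smul_left, hF_smul_right, ← mul_assoc, Complex.mul_conj,
        Complex.normSq_eq_norm_sq]
      have : ‖u‖ = 1 := by
        rw [hu, norm_div, Complex.norm_conj, Complex.norm_real, Real.norm_eq_abs,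
          _root_.abs_of_nonneg (le_of_lt habs), div_self (ne_of_gt habs)]
      rw [this]
      norm_num
    have := reBound2 (u • ξ) η
    rw [h1, h2] at this
    simpa using this

lemma hermForm_eq {m : ℕ} (V : Matrix (Fin m) (Fin m) ℝ) (ξ η : Fin m → ℂ) :
    hermForm V ξ η = hF (V.map Complex.ofReal) ξ η := by
  simp [hermForm, hF, Finset.sum_mul, Matrix.map_apply]


/-- If the symmetric part `V_S = (V + Vᵀ)/2` of the real matrix `V` is positive semidefinite
and `|Im(Vξ, ξ)| ≤ c₀ Re(Vξ, ξ)` for every `ξ ∈ ℂ^m`, then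
`|(Vξ, η)| ≤ (1 + c₀)(V_S ξ, ξ)^{1/2} (V_S η, η)^{1/2}`. -/
theorem stmt4 {m : ℕ} (V : Matrix (Fin m) (Fin m) ℝ) (c₀ : ℝ) (hc₀ : 0 < c₀)
    (hpsd : ∀ ξ : Fin m → ℝ, 0 ≤ ∑ i : Fin m, ∑ j : Fin m, (V i j + V j i) / 2 * ξ j * ξ i)
    (hIm : ∀ ξ : Fin m → ℂ, |(hermForm V ξ ξ).im| ≤ c₀ * (hermForm V ξ ξ).re) :
    ∀ ξ η : Fin m → ℂ,
      ‖hermForm V ξ η‖ ≤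
        (1 + c₀) * Real.sqrt ((hermForm ((V + V.transpose) / 2) ξ ξ).re) *
          Real.sqrt ((hermForm ((V + V.transpose) / 2) η η).re) := by
  set W : Matrix (Fin m) (Fin m) ℂ := V.map Complex.ofReal with hW
  set Ws : Matrix (Fin m) (Fin m) ℂ := ((V + V.transpose) / 2).map Complex.ofReal with hWsdef
  set Ma : Matrix (Fin m) (Fin m) ℂ := (-Complex.I) • (W - Ws) with hMadef
  have hWsherm : ∀ i j, Ws j i = (starRingEnd ℂ) (Ws i j) := by
    intro i j
    simp only [hWsdef, Matrix.map_apply, Complex.conj_ofReal, entry_half]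
    rw [add_comm]
  have hQpos : ∀ ξ : Fin m → ℂ, 0 ≤ (hF Ws ξ ξ).re := by
    intro ξ
    have key : (hF Ws ξ ξ).re =
        (∑ i, ∑ j, (V i j + V j i) / 2 * (ξ j).re * (ξ i).re) +
        (∑ i, ∑ j, (V i j + V j i) / 2 * (ξ j).im * (ξ i).im) := by
      rw [hF, Complex.re_sum, ← Finset.sum_add_distrib]
      refine Finset.sum_congr rfl fun i _ => ?_
      rw [Complex.re_sum, ← Finset.sum_add_distrib]
      refine Finset.sum_congr rfl fun j _ => ?_
      rw [hWsdef, Matrix.map_apply, entry_half]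
      simp [Complex.mul_re, Complex.mul_im]
    rw [key]
    exact add_nonneg (hpsd fun i => (ξ i).re) (hpsd fun i => (ξ i).im)
  have hWeq : ∀ ξ : Fin m → ℂ, hF W ξ ξ = ∑ i, ∑ j, (V i j : ℂ) * ξ j * (starRingEnd ℂ) (ξ i) := by
    intro ξ
    simp [hF, hW, Matrix.map_apply]
  have hconj : ∀ ξ : Fin m → ℂ, (starRingEnd ℂ) (hF W ξ ξ)
      = ∑ i, ∑ j, (V j i : ℂ) * ξ j * (starRingEnd ℂ) (ξ i) := by
    intro ξ
    rw [hWeq]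
    simp only [map_sum, map_mul, Complex.conj_conj, Complex.conj_ofReal]
    rw [Finset.sum_comm]
    exact Finset.sum_congr rfl fun i _ => Finset.sum_congr rfl fun j _ => by ring
  have hWs_half : ∀ ξ : Fin m → ℂ,
      hF Ws ξ ξ = (hF W ξ ξ + (starRingEnd ℂ) (hF W ξ ξ)) / 2 := by
    intro ξ
    rw [hconj, hWeq, hF, ← Finset.sum_add_distrib, Finset.sum_div]
    refine Finset.sum_congr rfl fun i _ => ?_
    rw [← Finset.sum_add_distrib, Finset.sum_div]
    refine Finset.sum_congr rfl fun j _ => ?_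
    rw [hWsdef, Matrix.map_apply, entry_half]
    push_cast
    ring
  have hQre : ∀ ξ : Fin m → ℂ, hF Ws ξ ξ = (((hF W ξ ξ).re : ℝ) : ℂ) := by
    intro ξ
    rw [hWs_half, Complex.add_conj]
    push_cast
    ring
  have hMaval : ∀ ξ : Fin m → ℂ, hF Ma ξ ξ = (((hF W ξ ξ).im : ℝ) : ℂ) := by
    intro ξ
    rw [hMadef, hF_msmul, hF_msub, hQre]
    have hz : hF W ξ ξ - (((hF W ξ ξ).re : ℝ) : ℂ) = ((hF W ξ ξ).im : ℂ) * Complex.I := by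
      apply Complex.ext <;> simp
    rw [hz]
    linear_combination -((hF W ξ ξ).im : ℂ) * Complex.I_mul_I
  have hMaherm : ∀ i j, Ma j i = (starRingEnd ℂ) (Ma i j) := by
    intro i j
    simp only [hMadef, Matrix.smul_apply, Matrix.sub_apply, hW, hWsdef, Matrix.map_apply,
      smul_eq_mul, map_mul, map_sub, map_neg, Complex.conj_I, Complex.conj_ofReal, entry_half]
    push_cast
    ring
  have hMabound : ∀ ξ : Fin m → ℂ, ‖hF Ma ξ ξ‖ ≤ c₀ * (hF Ws ξ ξ).re := by
    intro ξ
    rw [hMaval, Complex.norm_real, Real.norm_eq_abs]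
    have h2 : (hF Ws ξ ξ).re = (hF W ξ ξ).re := by
      rw [hQre]; simp
    rw [h2]
    have := hIm ξ
    rw [hermForm_eq] at this
    exact this
  have hQbound : ∀ ξ : Fin m → ℂ, ‖hF Ws ξ ξ‖ ≤ 1 * (hF Ws ξ ξ).re := by
    intro ξ
    have h0 : 0 ≤ (hF W ξ ξ).re := by
      have := hQpos ξ
      rw [hQre ξ] at this
      simpa using this
    rw [hQre, Complex.norm_real, Real.norm_eq_abs, one_mul, Complex.ofReal_re, _root_.abs_of_nonneg h0]
  have hdecomp : ∀ ξ η : Fin m → ℂ, hF W ξ η = hF Ws ξ η + Complex.I * hF Ma ξ η := by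
    intro ξ η
    rw [hMadef, hF_msmul, hF_msub]
    linear_combination (hF W ξ η - hF Ws ξ η) * Complex.I_mul_I
  have hQcs := key_cs Ws Ws hWsherm hQpos zero_le_one hQbound
  have hMacs := key_cs Ma Ws hMaherm hQpos (le_of_lt hc₀) hMabound
  intro ξ η
  rw [hermForm_eq, ← hW]
  have hgoalWs : hermForm ((V + V.transpose) / 2) ξ ξ = hF Ws ξ ξ := hermForm_eq _ _ _
  have hgoalWs' : hermForm ((V + V.transpose) / 2) η η = hF Ws η η := hermForm_eq _ _ _
  rw [hgoalWs, hgoalWs', hdecomp]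
  calc ‖hF Ws ξ η + Complex.I * hF Ma ξ η‖
      ≤ ‖hF Ws ξ η‖ + ‖Complex.I * hF Ma ξ η‖ := norm_add_le _ _
    _ = ‖hF Ws ξ η‖ + ‖hF Ma ξ η‖ := by
        rw [norm_mul, Complex.norm_I, one_mul]
    _ ≤ 1 * Real.sqrt ((hF Ws ξ ξ).re) * Real.sqrt ((hF Ws η η).re)
        + c₀ * Real.sqrt ((hF Ws ξ ξ).re) * Real.sqrt ((hF Ws η η).re) :=
        add_le_add (hQcs ξ η) (hMacs ξ η)
    _ = (1 + c₀) * Real.sqrt ((hF Ws ξ ξ).re) * Real.sqrt ((hF Ws η η).re) := by ring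
end
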